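/- Under the Tullock delegation model, the proxy selected by the weighted median rule is a proxy whose declared position is closest to the unweighted median of the entire voter population (proxies plus followers). Formally, if i* is a median voter of the combined profile, then the weighted-median winning proxy equals the proxy nearest to that median position. -/
import Mathlib


/-- `x` is a median of the multiset `P`. -/
def IsMedian (P : Multiset ℝ) (x : ℝ) : Prop :=
  x ∈ P ∧ 2 * (P.filter (fun y => y < x)).card ≤ P.card ∧
    2 * (P.filter (fun y => x < y)).card ≤ P.card

/-- The combined multiset of positions of proxies and followers. -/
def combined {m n : ℕ} (s : Fin m → ℝ) (p : Fin n → ℝ) : Multiset ℝ :=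
  Finset.univ.val.map s + Finset.univ.val.map p

/-- The weight of proxy `k`: itself plus the followers delegating to it. -/
def weight {m n : ℕ} (φ : Fin n → Fin m) (k : Fin m) : ℕ :=
  1 + (Finset.univ.filter (fun i : Fin n => φ i = k)).card

section Aux
variable {m n : ℕ}

lemma sum_weight_eq (φ : Fin n → Fin m) : ∑ k : Fin m, weight φ k = m + n := by
  unfold weight
  rw [Finset.sum_add_distrib,
    ← Finset.card_eq_sum_card_fiberwise (f := φ) (fun i _ => Finset.mem_univ _)]
  simp

lemma combined_card (s : Fin m → ℝ) (p : Fin n → ℝ) : (combined s p).card = m + n := by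
  simp [combined]

lemma combined_filter_card (s : Fin m → ℝ) (p : Fin n → ℝ) (q : ℝ → Prop) [DecidablePred q] :
    ((combined s p).filter q).card =
      (Finset.univ.filter (fun k => q (s k))).card +
        (Finset.univ.filter (fun i => q (p i))).card := by
  unfold combined
  rw [Multiset.filter_add, Multiset.card_add, ← Multiset.countP_eq_card_filter,
    ← Multiset.countP_eq_card_filter, Multiset.countP_map, Multiset.countP_map]
  rfl

lemma sum_weight_filter (φ : Fin n → Fin m) (q : Fin m → Prop) [DecidablePred q] :
    ∑ k ∈ Finset.univ.filter q, weight φ k =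
      (Finset.univ.filter q).card + (Finset.univ.filter (fun i => q (φ i))).card := by
  unfold weight
  rw [Finset.sum_add_distrib, Finset.sum_const, smul_eq_mul, mul_one]
  congr 1
  rw [Finset.card_eq_sum_card_fiberwise (f := φ) (t := Finset.univ.filter q)
    (fun i hi => by simpa using (Finset.mem_filter.mp hi).2)]
  refine Finset.sum_congr rfl fun k hk => ?_
  congr 1
  ext i
  simp only [Finset.mem_filter, Finset.mem_univ, true_and]
  have hq := (Finset.mem_filter.mp hk).2
  constructor
  · exact fun h => ⟨h ▸ hq, h⟩
  · exact fun h => h.2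

lemma two_mid_lt (a b x : ℝ) (hab : a < b) (h : |a - x| < |b - x|) : 2 * x < a + b := by
  rcases abs_cases (a - x) with ⟨e1, _⟩ | ⟨e1, _⟩ <;>
    rcases abs_cases (b - x) with ⟨e2, _⟩ | ⟨e2, _⟩ <;> linarith

lemma lt_two_mid (a b x : ℝ) (hab : a < b) (h : |b - x| < |a - x|) : a + b < 2 * x := by
  rcases abs_cases (a - x) with ⟨e1, _⟩ | ⟨e1, _⟩ <;>
    rcases abs_cases (b - x) with ⟨e2, _⟩ | ⟨e2, _⟩ <;> linarith

end Aux

/-- Under Tullock (nearest-proxy) delegation, any weighted-median winning proxy is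
the proxy whose declared position is closest to the unweighted median of the
entire voter population. -/
theorem weighted_median_winner_is_nearest_to_median {m n : ℕ} (hodd : Odd (m + n))
    (s : Fin m → ℝ) (p : Fin n → ℝ) (hs : Function.Injective s)
    (φ : Fin n → Fin m)
    (hφ : ∀ i k, k ≠ φ i → |s (φ i) - p i| < |s k - p i|)
    (μ : ℝ) (hμ : IsMedian (combined s p) μ)
    (jstar : Fin m)
    (hwm1 : 2 * (∑ k ∈ Finset.univ.filter (fun k => s k < s jstar), weight φ k) ≤
      ∑ k : Fin m, weight φ k)
    (hwm2 : 2 * (∑ k ∈ Finset.univ.filter (fun k => s jstar < s k), weight φ k) ≤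
      ∑ k : Fin m, weight φ k)
    (j0 : Fin m) (hj0 : ∀ k ≠ j0, |s j0 - μ| < |s k - μ|) :
    jstar = j0 := by
  obtain ⟨hmem, hlt, hgt⟩ := hμ
  have hP := combined_card s p
  have hW := sum_weight_eq φ
  -- proxies strictly left of j0 are left of μ, and symmetrically
  have hL : ∀ k : Fin m, s k < s j0 → s k < μ := by
    intro k hk
    have hne : k ≠ j0 := fun h => absurd (h ▸ hk) (lt_irrefl _)
    have h := hj0 k hne
    by_contra hle
    push_neg at hle
    have h1 : |s k - μ| = s k - μ := abs_of_nonneg (by linarith)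
    have h2 : s j0 - μ ≤ |s j0 - μ| := le_abs_self _
    linarith
  have hR : ∀ k : Fin m, s j0 < s k → μ < s k := by
    intro k hk
    have hne : k ≠ j0 := fun h => absurd (h ▸ hk) (lt_irrefl _)
    have h := hj0 k hne
    by_contra hle
    push_neg at hle
    have h1 : |s k - μ| = μ - s k := by rw [abs_sub_comm]; exact abs_of_nonneg (by linarith)
    have h2 : μ - s j0 ≤ |s j0 - μ| := by rw [abs_sub_comm]; exact le_abs_self _
    linarith
  -- followers whose proxy is strictly left of j0 are left of μ, and symmetrically
  have hLf : ∀ i : Fin n, s (φ i) < s j0 → p i < μ := by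
    intro i hi
    have hne : φ i ≠ j0 := fun h => absurd (h ▸ hi) (lt_irrefl _)
    have h1 := hφ i j0 (Ne.symm hne)
    have h2 := hj0 (φ i) hne
    have h3 := two_mid_lt _ _ _ hi h1
    have h4 := lt_two_mid _ _ _ hi h2
    linarith
  have hRf : ∀ i : Fin n, s j0 < s (φ i) → μ < p i := by
    intro i hi
    have hne : φ i ≠ j0 := fun h => absurd (h ▸ hi) (lt_irrefl _)
    have h1 := hφ i j0 (Ne.symm hne)
    have h2 := hj0 (φ i) hne
    have h3 := lt_two_mid _ _ _ hi h1
    have h4 := two_mid_lt _ _ _ hi h2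
    linarith
  -- j0 satisfies the weighted-median conditions
  have hLbound : 2 * (∑ k ∈ Finset.univ.filter (fun k => s k < s j0), weight φ k) ≤ m + n := by
    rw [sum_weight_filter]
    rw [combined_filter_card, hP] at hlt
    have c1 : (Finset.univ.filter (fun k : Fin m => s k < s j0)).card ≤
        (Finset.univ.filter (fun k : Fin m => s k < μ)).card := by
      apply Finset.card_le_card
      intro k hk
      simp only [Finset.mem_filter, Finset.mem_univ, true_and] at *
      exact hL k hk
    have c2 : (Finset.univ.filter (fun i : Fin n => s (φ i) < s j0)).card ≤
        (Finset.univ.filter (fun i : Fin n => p i < μ)).card := by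
      apply Finset.card_le_card
      intro i hi
      simp only [Finset.mem_filter, Finset.mem_univ, true_and] at *
      exact hLf i hi
    omega
  have hRbound : 2 * (∑ k ∈ Finset.univ.filter (fun k => s j0 < s k), weight φ k) ≤ m + n := by
    rw [sum_weight_filter]
    rw [combined_filter_card, hP] at hgt
    have c1 : (Finset.univ.filter (fun k : Fin m => s j0 < s k)).card ≤
        (Finset.univ.filter (fun k : Fin m => μ < s k)).card := by
      apply Finset.card_le_card
      intro k hk
      simp only [Finset.mem_filter, Finset.mem_univ, true_and] at *
      exact hR k hk
    have c2 : (Finset.univ.filter (fun i : Fin n => s j0 < s (φ i))).card ≤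
        (Finset.univ.filter (fun i : Fin n => μ < p i)).card := by
      apply Finset.card_le_card
      intro i hi
      simp only [Finset.mem_filter, Finset.mem_univ, true_and] at *
      exact hRf i hi
    omega
  -- uniqueness of the weighted median under odd total weight
  by_contra hne
  have hsne : s jstar ≠ s j0 := fun h => hne (hs h)
  obtain ⟨t, ht⟩ := hodd
  rcases lt_or_gt_of_ne hsne with hcase | hcase
  · -- s jstar < s j0 : use hwm2 and hLbound
    have hcover : (Finset.univ : Finset (Fin m)) ⊆
        Finset.univ.filter (fun k => s k < s j0) ∪
          Finset.univ.filter (fun k => s jstar < s k) := by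
      intro k _
      simp only [Finset.mem_union, Finset.mem_filter, Finset.mem_univ, true_and]
      rcases lt_or_ge (s k) (s j0) with h | h
      · exact Or.inl h
      · exact Or.inr (lt_of_lt_of_le hcase h)
    have hsum : (m + n : ℕ) ≤
        (∑ k ∈ Finset.univ.filter (fun k => s k < s j0), weight φ k) +
          (∑ k ∈ Finset.univ.filter (fun k => s jstar < s k), weight φ k) := by
      calc (m + n : ℕ) = ∑ k : Fin m, weight φ k := hW.symm
        _ ≤ ∑ k ∈ (Finset.univ.filter (fun k => s k < s j0) ∪
              Finset.univ.filter (fun k => s jstar < s k)), weight φ k :=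
            Finset.sum_le_sum_of_subset hcover
        _ ≤ _ := by
            have := Finset.sum_union_inter (s₁ := Finset.univ.filter (fun k => s k < s j0))
              (s₂ := Finset.univ.filter (fun k => s jstar < s k)) (f := weight φ)
            omega
    rw [hW] at hwm2
    omega
  · -- s j0 < s jstar : use hwm1 and hRbound
    have hcover : (Finset.univ : Finset (Fin m)) ⊆
        Finset.univ.filter (fun k => s j0 < s k) ∪
          Finset.univ.filter (fun k => s k < s jstar) := by
      intro k _
      simp only [Finset.mem_union, Finset.mem_filter, Finset.mem_univ, true_and]
      rcases lt_or_ge (s j0) (s k) with h | h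
      · exact Or.inl h
      · exact Or.inr (lt_of_le_of_lt h hcase)
    have hsum : (m + n : ℕ) ≤
        (∑ k ∈ Finset.univ.filter (fun k => s j0 < s k), weight φ k) +
          (∑ k ∈ Finset.univ.filter (fun k => s k < s jstar), weight φ k) := by
      calc (m + n : ℕ) = ∑ k : Fin m, weight φ k := hW.symm
        _ ≤ ∑ k ∈ (Finset.univ.filter (fun k => s j0 < s k) ∪
              Finset.univ.filter (fun k => s k < s jstar)), weight φ k :=
            Finset.sum_le_sum_of_subset hcover
        _ ≤ _ := by
            have := Finset.sum_union_inter (s₁ := Finset.univ.filter (fun k => s j0 < s k))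
              (s₂ := Finset.univ.filter (fun k => s k < s jstar)) (f := weight φ)
            omega
    rw [hW] at hwm1
    omega
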